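/- Let m > 0, t_f > 0, I0 ∈ (0,1). For all x, x̄ ∈ [0, t_f], the restricted disutility satisfies the lower bound 𝒟(x, x̄) ≥ min(1/m, I0)·(1 − exp(−t_f)): the epidemic always imposes an unavoidable positive expected cost on each individual, no matter which delay strategy they choose against any population strategy. -/
import Mathlib


/-- Prevalence function `I(u) = I0 / (I0 + (1 - I0) exp(-u))`. -/
noncomputable def Ifun (I0 u : ℝ) : ℝ := I0 / (I0 + (1 - I0) * Real.exp (-u))

/-- Susceptibility probability `p(x, x̄)`. -/
noncomputable def pSus (tf I0 x xb : ℝ) : ℝ :=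
  ((1 - Ifun I0 (tf - max x xb)) / (1 - I0)) *
    Real.exp (-(Ifun I0 (tf - max x xb)) * max (xb - x) 0)

/-- Restricted disutility `𝒟(x, x̄) = 1 - p(x,x̄)(1 - x/m)`. -/
noncomputable def Dis (m tf I0 x xb : ℝ) : ℝ := 1 - pSus tf I0 x xb * (1 - x / m)

attribute [irreducible] Ifun pSus Dis

lemma exp_convex_aux (a t : ℝ) (ha0 : 0 ≤ a) (ha1 : a ≤ 1) :
    Real.exp (a * t) ≤ (1 - a) + a * Real.exp t := by
  have h := convexOn_exp.2 (Set.mem_univ (0:ℝ)) (Set.mem_univ t)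
    (by linarith : (0:ℝ) ≤ 1 - a) ha0 (by ring)
  simpa using h

lemma aux_pfacts (I0 s d : ℝ) (hI0a : 0 < I0) (hI0b : I0 < 1)
    (hs0 : 0 ≤ s) (hd0 : 0 ≤ d) :
    0 ≤ (1 - Ifun I0 s) / (1 - I0) * Real.exp (-(Ifun I0 s) * d) ∧
      (1 - Ifun I0 s) / (1 - I0) * Real.exp (-(Ifun I0 s) * d) ≤
        1 - I0 + I0 * Real.exp (-(s + d)) := by
  have hI0' : 0 < 1 - I0 := by linarith
  have hexps : Real.exp (-s) ≤ 1 := Real.exp_le_one_iff.mpr (by linarith)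
  have hexpsp : 0 < Real.exp (-s) := Real.exp_pos _
  have hexpd : Real.exp (-d) ≤ 1 := Real.exp_le_one_iff.mpr (by linarith)
  have hexpdp : 0 < Real.exp (-d) := Real.exp_pos _
  set D := I0 + (1 - I0) * Real.exp (-s) with hD
  have hDpos : 0 < D := by
    rw [hD]; nlinarith [mul_pos hI0' hexpsp]
  have hDle1 : D ≤ 1 := by
    rw [hD]; nlinarith [mul_nonneg (le_of_lt hI0') (by linarith : 0 ≤ 1 - Real.exp (-s))]
  have hDgeI0 : I0 ≤ D := by
    rw [hD]; nlinarith [mul_pos hI0' hexpsp]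
  have hIeq : Ifun I0 s = I0 / D := by rw [Ifun, hD]
  have hIvle1 : Ifun I0 s ≤ 1 := by
    rw [hIeq]; exact div_le_one_of_le₀ hDgeI0 hDpos.le
  have hIvge : I0 ≤ Ifun I0 s := by
    rw [hIeq, le_div_iff₀ hDpos]; nlinarith
  have hfs : (1 - Ifun I0 s) / (1 - I0) ≤ 1 - I0 + I0 * Real.exp (-s) := by
    rw [div_le_iff₀ hI0', hIeq]
    have h1 : 1 - I0 / D = (D - I0) / D := by field_simp
    rw [h1, div_le_iff₀ hDpos, hD]
    nlinarith [mul_nonneg (mul_nonneg (mul_nonneg hI0a.le hI0'.le) hI0'.le)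
      (sq_nonneg (1 - Real.exp (-s)))]
  have hIvd : Real.exp (-(Ifun I0 s) * d) ≤ 1 - I0 + I0 * Real.exp (-d) := by
    have h2 := exp_convex_aux I0 (-d) hI0a.le hI0b.le
    have h1 : Real.exp (-(Ifun I0 s) * d) ≤ Real.exp (I0 * -d) := by
      apply Real.exp_le_exp.2
      nlinarith [mul_nonneg (sub_nonneg.2 hIvge) hd0]
    linarith
  have hprod : (1 - I0 + I0 * Real.exp (-s)) * (1 - I0 + I0 * Real.exp (-d))
      ≤ 1 - I0 + I0 * Real.exp (-(s + d)) := by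
    have hsd : Real.exp (-s) * Real.exp (-d) = Real.exp (-(s + d)) := by
      rw [← Real.exp_add]; congr 1; ring
    nlinarith [mul_nonneg (mul_nonneg hI0a.le hI0'.le)
      (mul_nonneg (by linarith : 0 ≤ 1 - Real.exp (-s))
        (by linarith : 0 ≤ 1 - Real.exp (-d))), hsd]
  have hA0 : (0:ℝ) ≤ (1 - Ifun I0 s) / (1 - I0) := div_nonneg (by linarith) hI0'.le
  have hB0 : (0:ℝ) ≤ Real.exp (-(Ifun I0 s) * d) := (Real.exp_pos _).le
  have hfs0 : (0:ℝ) ≤ 1 - I0 + I0 * Real.exp (-s) := by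
    nlinarith [mul_pos hI0a hexpsp]
  exact ⟨mul_nonneg hA0 hB0, le_trans (mul_le_mul hfs hIvd hB0 hfs0) hprod⟩

lemma aux_main (m tf I0 x p : ℝ) (hm : 0 < m) (hI0a : 0 < I0) (hI0b : I0 < 1)
    (hx0 : 0 ≤ x) (hxtf : x ≤ tf) (hp0 : 0 ≤ p)
    (hp1 : p ≤ 1 - I0 + I0 * Real.exp (x - tf)) :
    min (1 / m) I0 * (1 - Real.exp (-tf)) ≤ 1 - p * (1 - x / m) := by
  have hI0' : 0 < 1 - I0 := by linarith
  have hc1 : min (1/m) I0 ≤ 1/m := min_le_left _ _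
  have hc2 : min (1/m) I0 ≤ I0 := min_le_right _ _
  have hc0 : 0 ≤ min (1/m) I0 := le_min (by positivity) hI0a.le
  have hT : 0 < Real.exp (-tf) := Real.exp_pos _
  rcases le_or_gt x m with hxm | hxm
  · have hxw : 0 ≤ 1 - x / m := by
      rw [sub_nonneg, div_le_one hm]; exact hxm
    have h1 : p * (1 - x/m) ≤ (1 - I0 + I0 * Real.exp (x - tf)) * (1 - x/m) :=
      mul_le_mul_of_nonneg_right hp1 hxw
    have hE1 : Real.exp (x - tf) ≤ 1 := Real.exp_le_one_iff.mpr (by linarith)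
    have hxE : Real.exp (x - tf) - Real.exp (-tf) ≤ x * Real.exp (x - tf) := by
      have h3 : Real.exp (x - tf) = Real.exp x * Real.exp (-tf) := by
        rw [← Real.exp_add]; ring_nf
      have h4 := Real.add_one_le_exp (-x)
      have h6 : (-x + 1) * Real.exp x ≤ Real.exp (-x) * Real.exp x :=
        mul_le_mul_of_nonneg_right h4 (Real.exp_pos x).le
      have h5 : Real.exp (-x) * Real.exp x = 1 := by
        rw [← Real.exp_add]; simp
      have h7 : (0:ℝ) ≤ 1 - (-x + 1) * Real.exp x := by linarith
      nlinarith [mul_nonneg hT.le h7, h3]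
    have hq : x / m = x * (1/m) := by ring
    rw [hq] at h1 ⊢
    nlinarith [h1,
      mul_nonneg (sub_nonneg.2 hc2) (sub_nonneg.2 hE1),
      mul_nonneg hc0 (sub_nonneg.2 hxE),
      mul_nonneg (sub_nonneg.2 hc1) (mul_nonneg hx0 (Real.exp_pos (x - tf)).le),
      mul_nonneg (mul_nonneg hx0 (le_of_lt (one_div_pos.mpr hm)))
        (mul_nonneg hI0'.le (sub_nonneg.2 hE1))]
  · have hxw : 1 - x / m < 0 := by
      have : 1 < x / m := (one_lt_div hm).mpr hxm
      linarith
    have h1 : p * (1 - x/m) ≤ 0 :=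
      mul_nonpos_of_nonneg_of_nonpos hp0 hxw.le
    nlinarith [mul_nonneg hc0 hT.le]

/-- The epidemic always imposes an unavoidable positive expected cost:
`𝒟(x, x̄) ≥ min(1/m, I0)(1 - exp(-t_f))` for all delay strategies. -/
theorem stmt19 (m tf I0 : ℝ) (hm : 0 < m) (htf : 0 < tf)
    (hI0 : I0 ∈ Set.Ioo (0:ℝ) 1) :
    ∀ x ∈ Set.Icc (0:ℝ) tf, ∀ xb ∈ Set.Icc (0:ℝ) tf,
      min (1 / m) I0 * (1 - Real.exp (-tf)) ≤ Dis m tf I0 x xb := by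
  obtain ⟨hI0a, hI0b⟩ := hI0
  intro x hx xb hxb
  obtain ⟨hx0, hxtf⟩ := hx
  obtain ⟨hxb0, hxbtf⟩ := hxb
  have hMtf : max x xb ≤ tf := max_le hxtf hxbtf
  have hMx : x ≤ max x xb := le_max_left _ _
  have hdMx : max (xb - x) 0 = max x xb - x := by
    rcases le_total xb x with h | h
    · rw [max_eq_right (by linarith : xb - x ≤ (0:ℝ)), max_eq_left h]; ring
    · rw [max_eq_left (by linarith : (0:ℝ) ≤ xb - x), max_eq_right h]
  have hsd : (tf - max x xb) + max (xb - x) 0 = tf - x := by rw [hdMx]; ring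
  obtain ⟨hp0, hp1⟩ := aux_pfacts I0 (tf - max x xb) (max (xb - x) 0) hI0a hI0b
    (by linarith) (le_max_right _ _)
  rw [hsd, neg_sub] at hp1
  rw [Dis, pSus]
  exact aux_main m tf I0 x _ hm hI0a hI0b hx0 hxtf hp0 hp1
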